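/- arXiv:2603.04020 — 2 statements merged into one kernel-verified Lean document; each statement's English description precedes it below -/
import Mathlib

section
/- Let X be a finite set with |X| ≥ 2, φ a finite-state automorphism of the rooted tree X*, and μ the Bernoulli measure on X^ℕ. For k ≥ 0 let P_k = { w ∈ X^k : φ(w) = w, φ|_w ≠ id } and F_k = ⋃_{w ∈ P_k} wX^ℕ. Then the sequence (F_k) is decreasing, and Fix_φ \ interior(Fix_φ) = ⋂_k F_k; consequently μ(Fix_φ \ interior(Fix_φ)) = lim_{k→∞} |P_k| / |X|^k. -/
/-- An automorphism of the rooted tree `X*` of finite words over `X`: a bijection of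
`List X` preserving lengths and prefixes. -/
structure TreeAut (X : Type*) where
  toFun : List X → List X
  invFun : List X → List X
  left_inv : Function.LeftInverse invFun toFun
  right_inv : Function.RightInverse invFun toFun
  length_eq : ∀ w : List X, (toFun w).length = w.length
  take_append : ∀ w v : List X, (toFun (w ++ v)).take w.length = toFun w

/-- The restriction (section) `φ|_w` of a tree automorphism `φ` at the word `w`,
characterised by `φ(w v) = φ(w) φ|_w(v)`. -/
def TreeAut.restrict {X : Type*} (φ : TreeAut X) (w : List X) : List X → List X :=
  fun v => (φ.toFun (w ++ v)).drop w.length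

/-- The set `P_k` of words of length `k` fixed by `φ` whose restriction is nontrivial. -/
def TreeAut.badWords {X : Type*} (φ : TreeAut X) (k : ℕ) : Set (List X) :=
  {w : List X | w.length = k ∧ φ.toFun w = w ∧ φ.restrict w ≠ id}

open MeasureTheory
open scoped ENNReal

/-- The prefix of length `n` of a sequence `x : ℕ → X`, as a word. -/
def prefixWord {X : Type*} (x : ℕ → X) (n : ℕ) : List X :=
  List.ofFn (fun i : Fin n => x i)

/-- The cylinder set of sequences beginning with the word `w`. -/
def cylinder {X : Type*} (w : List X) : Set (ℕ → X) :=
  {x : ℕ → X | prefixWord x w.length = w}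

/-- The homeomorphism of `X^ℕ` induced by a tree automorphism `φ`: the `n`-th letter of
`φ(x)` is the `n`-th letter of `φ` applied to the prefix of `x` of length `n + 1`. -/
def TreeAut.seqAct {X : Type*} (φ : TreeAut X) (x : ℕ → X) : ℕ → X :=
  fun n => (φ.toFun (prefixWord x (n + 1))).getD n (x n)

/-- The fixed-point set in `X^ℕ` of the homeomorphism induced by `φ`. -/
def TreeAut.fixSeq {X : Type*} (φ : TreeAut X) : Set (ℕ → X) :=
  {x : ℕ → X | φ.seqAct x = x}

open Filter

/-- The set `F_k = ⋃_{w ∈ P_k} w X^ℕ`. -/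
def TreeAut.badCylinders {X : Type*} (φ : TreeAut X) (k : ℕ) : Set (ℕ → X) :=
  ⋃ w ∈ φ.badWords k, cylinder w


section AuxLemmas
variable {X : Type*}

lemma prefixWord_length (x : ℕ → X) (n : ℕ) : (prefixWord x n).length = n := by
  simp [prefixWord]

lemma prefixWord_zero (x : ℕ → X) : prefixWord x 0 = [] := by simp [prefixWord]

lemma prefixWord_succ (x : ℕ → X) (n : ℕ) :
    prefixWord x (n + 1) = prefixWord x n ++ [x n] := by
  rw [prefixWord, List.ofFn_succ']
  simp [prefixWord, List.concat_eq_append]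

lemma prefixWord_getElem (x : ℕ → X) (n i : ℕ) (h : i < (prefixWord x n).length) :
    (prefixWord x n)[i] = x i := by
  simp [prefixWord]

lemma prefixWord_take (x : ℕ → X) {m n : ℕ} (h : m ≤ n) :
    (prefixWord x n).take m = prefixWord x m := by
  apply List.ext_getElem
  · simp [prefixWord]; omega
  · intro i h1 h2
    simp [prefixWord]

lemma mem_cylinder_iff {w : List X} {x : ℕ → X} :
    x ∈ _root_.cylinder w ↔ ∀ i (h : i < w.length), x i = w[i] := by
  constructor
  · intro hx i h
    rw [List.getElem_of_eq hx.symm h, prefixWord_getElem]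
  · intro h
    show prefixWord x w.length = w
    apply List.ext_getElem (by simp [prefixWord])
    intro i h1 h2
    rw [prefixWord_getElem, h i h2]

lemma self_mem_cylinder_prefix (x : ℕ → X) (k : ℕ) : x ∈ _root_.cylinder (prefixWord x k) := by
  show prefixWord x (prefixWord x k).length = prefixWord x k
  rw [prefixWord_length]

lemma mem_cylinder_prefixWord_iff {x y : ℕ → X} {k : ℕ} :
    y ∈ _root_.cylinder (prefixWord x k) ↔ ∀ i < k, y i = x i := by
  rw [mem_cylinder_iff]
  constructor
  · intro h i hi
    have := h i (by simpa [prefixWord_length] using hi)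
    rwa [prefixWord_getElem] at this
  · intro h i hi
    rw [prefixWord_getElem]
    exact h i (by simpa [prefixWord_length] using hi)

lemma mem_fixSeq_iff (φ : TreeAut X) (x : ℕ → X) :
    x ∈ φ.fixSeq ↔ ∀ n, φ.toFun (prefixWord x n) = prefixWord x n := by
  constructor
  · intro hx n
    induction n with
    | zero =>
      rw [prefixWord_zero]
      have := φ.length_eq []
      simpa using List.length_eq_zero_iff.mp (by simpa using this)
    | succ n ih =>
      have hlen : (φ.toFun (prefixWord x (n+1))).length = n+1 := by
        rw [φ.length_eq, prefixWord_length]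
      have htake : (φ.toFun (prefixWord x (n+1))).take n = prefixWord x n := by
        have h := φ.take_append (prefixWord x n) [x n]
        rw [← prefixWord_succ, prefixWord_length] at h
        rw [h, ih]
      have hget : (φ.toFun (prefixWord x (n+1)))[n]'(by omega) = x n := by
        have hx' : φ.seqAct x n = x n := congrFun hx n
        unfold TreeAut.seqAct at hx'
        rwa [List.getD_eq_getElem _ _ (by omega)] at hx'
      have hsplit : φ.toFun (prefixWord x (n+1)) =
          (φ.toFun (prefixWord x (n+1))).take n ++ (φ.toFun (prefixWord x (n+1))).drop n :=
        (List.take_append_drop _ _).symm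
      rw [List.drop_eq_getElem_cons (by omega), hget,
        List.drop_eq_nil_of_le (by omega)] at hsplit
      rw [hsplit, htake, prefixWord_succ]
  · intro h
    funext n
    show (φ.toFun (prefixWord x (n+1))).getD n (x n) = x n
    rw [h, List.getD_eq_getElem _ _ (by simp [prefixWord_length]), prefixWord_getElem]

lemma fixAll_iff (φ : TreeAut X) (w : List X) :
    (∀ v, φ.toFun (w ++ v) = w ++ v) ↔ (φ.toFun w = w ∧ φ.restrict w = id) := by
  constructor
  · intro h
    refine ⟨by simpa using h [], ?_⟩
    funext v
    show (φ.toFun (w ++ v)).drop w.length = v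
    rw [h v, List.drop_left]
  · rintro ⟨h1, h2⟩ v
    have ht : (φ.toFun (w ++ v)).take w.length = w := by rw [φ.take_append, h1]
    have hd : (φ.toFun (w ++ v)).drop w.length = v := congrFun h2 v
    calc φ.toFun (w ++ v)
        = (φ.toFun (w ++ v)).take w.length ++ (φ.toFun (w ++ v)).drop w.length :=
          (List.take_append_drop _ _).symm
      _ = w ++ v := by rw [ht, hd]

lemma cylinder_subset_fixSeq_iff [Nonempty X] (φ : TreeAut X) (w : List X) :
    _root_.cylinder w ⊆ φ.fixSeq ↔ ∀ v, φ.toFun (w ++ v) = w ++ v := by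
  constructor
  · intro h v
    classical
    set a : X := Classical.arbitrary X
    set y : ℕ → X := fun n => (w ++ v).getD n a with hy
    have hyc : y ∈ _root_.cylinder w := by
      rw [mem_cylinder_iff]
      intro i hi
      have hi' : i < (w ++ v).length := by simp; omega
      simp only [hy, List.getD_eq_getElem _ _ hi']
      exact List.getElem_append_left hi
    have hyfix := (mem_fixSeq_iff φ y).mp (h hyc)
    have hpre : prefixWord y (w.length + v.length) = w ++ v := by
      apply List.ext_getElem (by simp [prefixWord_length])
      intro i h1 h2
      rw [prefixWord_getElem]
      simp only [hy, List.getD_eq_getElem _ _ h2]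
    have := hyfix (w.length + v.length)
    rwa [hpre] at this
  · intro h y hy
    rw [mem_fixSeq_iff]
    intro n
    rcases le_or_gt n w.length with hn | hn
    · have hwy : prefixWord y w.length = w := hy
      have hpre : prefixWord y n = w.take n := by
        rw [← hwy, prefixWord_take _ hn]
      have hlen : (w.take n).length = n := by simp; omega
      have h2 := φ.take_append (w.take n) (w.drop n)
      rw [List.take_append_drop, hlen] at h2
      have hw : φ.toFun w = w := by simpa using h []
      rw [hw] at h2
      rw [hpre]
      exact h2.symm
    · have hwy : prefixWord y w.length = w := hy
      have hpre : prefixWord y n = w ++ (prefixWord y n).drop w.length := by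
        conv_lhs => rw [← List.take_append_drop w.length (prefixWord y n)]
        rw [prefixWord_take _ hn.le, hwy]
      rw [hpre, h]

lemma mem_badCylinders_iff (φ : TreeAut X) (k : ℕ) (x : ℕ → X) :
    x ∈ φ.badCylinders k ↔ prefixWord x k ∈ φ.badWords k := by
  constructor
  · intro hx
    rcases Set.mem_iUnion₂.mp hx with ⟨w, hw, hxc⟩
    have hp : prefixWord x k = w := by
      have := hxc; rw [← hw.1]; exact this
    rwa [hp]
  · intro h
    exact Set.mem_iUnion₂.mpr ⟨prefixWord x k, h, by
      have := self_mem_cylinder_prefix x k; exact this⟩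

end AuxLemmas

section TopoLemmas
variable {X : Type*} [TopologicalSpace X] [DiscreteTopology X]

lemma isOpen_cylinder [Nonempty X] (w : List X) : IsOpen (_root_.cylinder w) := by
  classical
  have : _root_.cylinder w =
      ⋂ i ∈ Finset.range w.length,
        (fun x : ℕ → X => x i) ⁻¹' {w.getD i (Classical.arbitrary X)} := by
    ext x
    simp only [Set.mem_iInter, Finset.mem_range, Set.mem_preimage, Set.mem_singleton_iff,
      mem_cylinder_iff]
    constructor
    · intro h i hi
      rw [List.getD_eq_getElem _ _ hi]; exact h i hi
    · intro h i hi
      rw [← List.getD_eq_getElem _ _ hi]; exact h i hi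
  rw [this]
  exact isOpen_biInter_finset fun i _ =>
    (continuous_apply i).isOpen_preimage _ (isOpen_discrete _)

lemma mem_interior_fixSeq_iff [Nonempty X] (φ : TreeAut X) (x : ℕ → X) :
    x ∈ interior φ.fixSeq ↔ ∃ k, _root_.cylinder (prefixWord x k) ⊆ φ.fixSeq := by
  constructor
  · intro hx
    rcases mem_interior.mp hx with ⟨U, hUsub, hUopen, hxU⟩
    rcases isOpen_pi_iff.mp hUopen x hxU with ⟨I, u, hu, hpi⟩
    refine ⟨(I.sup id) + 1, fun y hy => ?_⟩
    apply hUsub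
    apply hpi
    intro i hi
    have hilt : i < I.sup id + 1 := Nat.lt_succ_of_le (Finset.le_sup (f := id) hi)
    rw [mem_cylinder_prefixWord_iff.mp hy i hilt]
    exact (hu i hi).2
  · rintro ⟨k, hk⟩
    exact mem_interior.mpr ⟨_root_.cylinder (prefixWord x k), hk, isOpen_cylinder _,
      self_mem_cylinder_prefix x k⟩

end TopoLemmas

section CountLemmas
variable {X : Type*} [Fintype X]

lemma ncard_length_eq (k : ℕ) : {l : List X | l.length = k}.ncard = Fintype.card X ^ k := by
  classical
  rw [← Nat.card_coe_set_eq]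
  have e : {l : List X | l.length = k} ≃ List.Vector X k :=
    ⟨fun l => ⟨l.1, l.2⟩, fun v => ⟨v.1, v.2⟩, fun _ => rfl, fun _ => rfl⟩
  rw [Nat.card_congr e, Nat.card_eq_fintype_card, card_vector]

end CountLemmas

/-- Let `X` be finite with `|X| ≥ 2`, `φ` a finite-state automorphism of
`X*`, and `μ` the Bernoulli measure on `X^ℕ`.  With
`P_k = {w ∈ X^k : φ(w) = w, φ|_w ≠ id}` and `F_k = ⋃_{w ∈ P_k} wX^ℕ`, the sequence
`(F_k)` is decreasing, `Fix_φ \ interior Fix_φ = ⋂_k F_k`, and consequently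
`μ(Fix_φ \ interior Fix_φ) = lim_k |P_k| / |X|^k`. -/
theorem boundary_of_fixSeq_eq_iInter_badCylinders
    {X : Type*} [Fintype X] [TopologicalSpace X] [DiscreteTopology X]
    [MeasurableSpace X] (hX : 2 ≤ Fintype.card X)
    (φ : TreeAut X)
    (hfs : (Set.range fun w : List X => φ.restrict w).Finite)
    (μ : Measure (ℕ → X))
    (hμ : ∀ w : List X, μ (cylinder w) = ((Fintype.card X : ℝ≥0∞))⁻¹ ^ w.length) :
    (∀ k : ℕ, φ.badCylinders (k + 1) ⊆ φ.badCylinders k) ∧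
    (φ.fixSeq \ interior φ.fixSeq = ⋂ k : ℕ, φ.badCylinders k) ∧
    Tendsto (fun k : ℕ => ((φ.badWords k).ncard : ℝ≥0∞) / (Fintype.card X : ℝ≥0∞) ^ k)
      atTop (nhds (μ (φ.fixSeq \ interior φ.fixSeq))) := by
  classical
  haveI : Nonempty X := Fintype.card_pos_iff.mp (by omega)
  set c : ℝ≥0∞ := (Fintype.card X : ℝ≥0∞) with hc
  have hc0 : c ≠ 0 := by
    simp only [hc, ne_eq, Nat.cast_eq_zero]; omega
  have hctop : c ≠ ⊤ := by simp [hc]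
  have hck0 : ∀ k : ℕ, c ^ k ≠ 0 := fun k => pow_ne_zero k hc0
  have hcktop : ∀ k : ℕ, c ^ k ≠ ⊤ := fun k => ENNReal.pow_ne_top hctop
  -- Part 1: decreasing
  have part1 : ∀ k : ℕ, φ.badCylinders (k + 1) ⊆ φ.badCylinders k := by
    intro k x hx
    rw [mem_badCylinders_iff] at hx ⊢
    obtain ⟨hlen, hfix, hne⟩ := hx
    set w' : List X := prefixWord x k with hw'
    have hw'len : w'.length = k := prefixWord_length x k
    have hsucc : prefixWord x (k + 1) = w' ++ [x k] := prefixWord_succ x k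
    have hfix' : φ.toFun w' = w' := by
      have h := φ.take_append w' [x k]
      rw [← hsucc, hfix, hw'len, hsucc] at h
      rw [← h]
      simp [hw'len]
    refine ⟨hw'len, hfix', ?_⟩
    intro hid
    apply hne
    have hall : ∀ v, φ.toFun (w' ++ v) = w' ++ v := (fixAll_iff φ w').mpr ⟨hfix', hid⟩
    funext v
    show (φ.toFun (prefixWord x (k+1) ++ v)).drop (prefixWord x (k+1)).length = v
    rw [hsucc, List.append_assoc, hall ([x k] ++ v), ← List.append_assoc, List.drop_left]
  -- Part 2: boundary equality
  have part2 : φ.fixSeq \ interior φ.fixSeq = ⋂ k : ℕ, φ.badCylinders k := by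
    ext x
    simp only [Set.mem_diff, Set.mem_iInter]
    constructor
    · rintro ⟨hfix, hni⟩ k
      rw [mem_badCylinders_iff]
      refine ⟨prefixWord_length x k, (mem_fixSeq_iff φ x).mp hfix k, ?_⟩
      intro hid
      apply hni
      rw [mem_interior_fixSeq_iff]
      exact ⟨k, (cylinder_subset_fixSeq_iff φ _).mpr ((fixAll_iff φ _).mpr
        ⟨(mem_fixSeq_iff φ x).mp hfix k, hid⟩)⟩
    · intro hx
      have hP : ∀ k, prefixWord x k ∈ φ.badWords k := fun k =>
        (mem_badCylinders_iff φ k x).mp (hx k)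
      refine ⟨(mem_fixSeq_iff φ x).mpr fun n => (hP n).2.1, ?_⟩
      intro hint
      rcases (mem_interior_fixSeq_iff φ x).mp hint with ⟨k, hsub⟩
      exact (hP k).2.2 ((fixAll_iff φ _).mp ((cylinder_subset_fixSeq_iff φ _).mp hsub)).2
  refine ⟨part1, part2, ?_⟩
  -- Part 3: the measure computation
  set f : ℕ → ℝ≥0∞ := fun k => ((φ.badWords k).ncard : ℝ≥0∞) / c ^ k with hf
  have hμuniv : μ Set.univ = 1 := by
    have h := hμ []
    have hcyl : _root_.cylinder ([] : List X) = Set.univ := by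
      ext x; simp [_root_.cylinder, prefixWord_zero]
    rw [hcyl] at h
    simpa using h
  -- generic bound for unions of cylinders over finite sets of words of length k
  have key : ∀ (k : ℕ) (S : Set (List X)), S.Finite → (∀ w ∈ S, w.length = k) →
      μ (⋃ w ∈ S, _root_.cylinder w) ≤ (S.ncard : ℝ≥0∞) / c ^ k := by
    intro k S hS hlen
    have hU : (⋃ w ∈ S, _root_.cylinder w) = ⋃ w ∈ hS.toFinset, _root_.cylinder w := by
      simp [Set.Finite.mem_toFinset]
    rw [hU]
    refine le_trans (measure_biUnion_finset_le _ _) ?_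
    have hsum : ∑ w ∈ hS.toFinset, μ (_root_.cylinder w) = hS.toFinset.card * (c ^ k)⁻¹ := by
      rw [Finset.sum_congr rfl fun w hw => ?_, Finset.sum_const, nsmul_eq_mul]
      rw [hμ w, hlen w (hS.mem_toFinset.mp hw), ← ENNReal.inv_pow]
    rw [hsum, Set.ncard_eq_toFinset_card _ hS, div_eq_mul_inv]
  -- per-k identities
  have hk : ∀ k : ℕ, μ (φ.badCylinders k) = f k ∧ μ (Set.univ \ φ.badCylinders k) ≤ 1 - f k := by
    intro k
    set S : Set (List X) := {l : List X | l.length = k} with hSdef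
    have hSfin : S.Finite := List.finite_length_eq X k
    have hPsub : φ.badWords k ⊆ S := fun w hw => hw.1
    have hPfin : (φ.badWords k).Finite := hSfin.subset hPsub
    have hQfin : (S \ φ.badWords k).Finite := hSfin.diff
    have hFle : μ (φ.badCylinders k) ≤ f k :=
      key k (φ.badWords k) hPfin (fun w hw => hw.1)
    have hcover : Set.univ \ φ.badCylinders k ⊆ ⋃ w ∈ S \ φ.badWords k, _root_.cylinder w := by
      rintro x ⟨-, hx⟩
      by_cases hb : prefixWord x k ∈ φ.badWords k
      · exact absurd ((mem_badCylinders_iff φ k x).mpr hb) hx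
      · exact Set.mem_iUnion₂.mpr ⟨prefixWord x k, ⟨prefixWord_length x k, hb⟩,
          self_mem_cylinder_prefix x k⟩
    have hGle : μ (Set.univ \ φ.badCylinders k) ≤ ((S \ φ.badWords k).ncard : ℝ≥0∞) / c ^ k :=
      le_trans (measure_mono hcover)
        (key k (S \ φ.badWords k) hQfin (fun w hw => hw.1))
    -- arithmetic: p/c^k + q/c^k = 1
    have hpq : (φ.badWords k).ncard + (S \ φ.badWords k).ncard = Fintype.card X ^ k := by
      rw [Set.ncard_diff hPsub hPfin]
      have hle : (φ.badWords k).ncard ≤ S.ncard := Set.ncard_le_ncard hPsub hSfin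
      rw [hSdef, ncard_length_eq] at hle ⊢
      omega
    have hone : f k + ((S \ φ.badWords k).ncard : ℝ≥0∞) / c ^ k = 1 := by
      show ((φ.badWords k).ncard : ℝ≥0∞) / c ^ k +
        ((S \ φ.badWords k).ncard : ℝ≥0∞) / c ^ k = 1
      rw [div_eq_mul_inv, div_eq_mul_inv, ← add_mul, ← Nat.cast_add, hpq, Nat.cast_pow,
        ← hc, ENNReal.mul_inv_cancel (hck0 k) (hcktop k)]
    have hfk_ne_top : f k ≠ ⊤ := by
      intro h
      rw [h] at hone
      simp at hone
    have hq_ne_top : ((S \ φ.badWords k).ncard : ℝ≥0∞) / c ^ k ≠ ⊤ := by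
      intro h
      rw [h] at hone
      simp at hone
    have hsum1 : (1 : ℝ≥0∞) ≤ μ (φ.badCylinders k) + μ (Set.univ \ φ.badCylinders k) := by
      rw [← hμuniv]
      refine le_trans (measure_mono ?_) (measure_union_le _ _)
      rw [Set.union_diff_self]
      exact Set.subset_union_right
    have hFge : f k ≤ μ (φ.badCylinders k) := by
      have h1 : f k + ((S \ φ.badWords k).ncard : ℝ≥0∞) / c ^ k ≤
          μ (φ.badCylinders k) + ((S \ φ.badWords k).ncard : ℝ≥0∞) / c ^ k := by
        rw [hone]
        exact le_trans hsum1 (add_le_add le_rfl hGle)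
      exact (ENNReal.add_le_add_iff_right hq_ne_top).mp h1
    refine ⟨le_antisymm hFle hFge, ?_⟩
    have hq_eq : ((S \ φ.badWords k).ncard : ℝ≥0∞) / c ^ k = 1 - f k :=
      ENNReal.eq_sub_of_add_eq hfk_ne_top (by rw [add_comm]; exact hone)
    exact hq_eq ▸ hGle
  have hμF : ∀ k, μ (φ.badCylinders k) = f k := fun k => (hk k).1
  have hFanti : Antitone (fun k => φ.badCylinders k) := antitone_nat_of_succ_le part1
  have hfanti : Antitone f := fun i j hij => by
    rw [← hμF i, ← hμF j]; exact measure_mono (hFanti hij)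
  have hf_le_one : ∀ k, f k ≤ 1 := fun k => by
    rw [← hμF k, ← hμuniv]; exact measure_mono (Set.subset_univ _)
  have hinf_le_one : ⨅ k, f k ≤ 1 := le_trans (iInf_le f 0) (hf_le_one 0)
  set A : Set (ℕ → X) := ⋂ k : ℕ, φ.badCylinders k with hA
  have hAle : μ A ≤ ⨅ k, f k :=
    le_iInf fun k => (hμF k) ▸ measure_mono (Set.iInter_subset _ k)
  have hAge : ⨅ k, f k ≤ μ A := by
    have hAc : μ Aᶜ ≤ 1 - ⨅ k, f k := by
      have hAc_eq : Aᶜ = ⋃ k : ℕ, (φ.badCylinders k)ᶜ := by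
        rw [hA, Set.compl_iInter]
      have hdir : Directed (· ⊆ ·) fun k : ℕ => (φ.badCylinders k)ᶜ :=
        (Monotone.directed_le fun i j hij => Set.compl_subset_compl.mpr (hFanti hij))
      rw [hAc_eq, hdir.measure_iUnion]
      refine iSup_le fun k => ?_
      have : μ (φ.badCylinders k)ᶜ ≤ 1 - f k := by
        rw [Set.compl_eq_univ_diff]; exact (hk k).2
      refine le_trans this ?_
      rw [ENNReal.sub_iInf]
      exact le_iSup (fun k => 1 - f k) k
    have h1 : (1 : ℝ≥0∞) ≤ μ A + μ Aᶜ := by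
      rw [← hμuniv]
      refine le_trans (measure_mono ?_) (measure_union_le _ _)
      rw [Set.union_compl_self]
    have hsub_ne_top : (1 : ℝ≥0∞) - ⨅ k, f k ≠ ⊤ := by
      exact ne_top_of_le_ne_top (by simp) tsub_le_self
    have h2 : (⨅ k, f k) + (1 - ⨅ k, f k) ≤ μ A + (1 - ⨅ k, f k) := by
      rw [add_comm (⨅ k, f k), tsub_add_cancel_of_le hinf_le_one]
      exact le_trans h1 (add_le_add le_rfl hAc)
    exact (ENNReal.add_le_add_iff_right hsub_ne_top).mp h2
  have hμA : μ A = ⨅ k, f k := le_antisymm hAle hAge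
  rw [part2, hμA]
  exact tendsto_atTop_iInf hfanti
end

section
/- Let G be an étale groupoid which can be covered by countably many open bisections, and μ a Radon measure on G⁰. Then G is essentially free with respect to μ if and only if μ_sf({ x ∈ G⁰ : G_x^x ≠ {x} }) = 0. -/
open MeasureTheory
open scoped ENNReal

/-- An étale groupoid: a topological groupoid (possibly non-Hausdorff) on the type `G`,
with partially defined multiplication `mul g h` (meaningful when `src g = rng h`),
inversion `inv`, source and range maps `src`, `rng`, and open unit space `unitSpace`
which is locally compact and Hausdorff; the source and range maps are local
homeomorphisms. -/
structure EtaleGroupoid (G : Type*) [TopologicalSpace G] : Type _ where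
  src : G → G
  rng : G → G
  mul : G → G → G
  inv : G → G
  unitSpace : Set G
  src_mem : ∀ g, src g ∈ unitSpace
  rng_mem : ∀ g, rng g ∈ unitSpace
  src_unit : ∀ u ∈ unitSpace, src u = u
  rng_unit : ∀ u ∈ unitSpace, rng u = u
  src_mul : ∀ g h, src g = rng h → src (mul g h) = src h
  rng_mul : ∀ g h, src g = rng h → rng (mul g h) = rng g
  mul_assoc : ∀ g h k, src g = rng h → src h = rng k →
    mul (mul g h) k = mul g (mul h k)
  src_inv : ∀ g, src (inv g) = rng g
  rng_inv : ∀ g, rng (inv g) = src g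
  inv_mul_self : ∀ g, mul (inv g) g = src g
  mul_inv_self : ∀ g, mul g (inv g) = rng g
  mul_src_self : ∀ g, mul g (src g) = g
  rng_mul_self : ∀ g, mul (rng g) g = g
  isOpen_unitSpace : IsOpen unitSpace
  t2_unitSpace : ∀ x ∈ unitSpace, ∀ y ∈ unitSpace, x ≠ y →
    ∃ U V : Set G, IsOpen U ∧ IsOpen V ∧ x ∈ U ∧ y ∈ V ∧ U ∩ V = ∅
  locallyCompact_unitSpace : ∀ x ∈ unitSpace, ∀ U : Set G, IsOpen U → x ∈ U →
    ∃ K V : Set G, IsCompact K ∧ IsOpen V ∧ x ∈ V ∧ V ⊆ K ∧ K ⊆ U ∩ unitSpace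
  continuous_inv : Continuous inv
  continuousOn_mul : ContinuousOn (fun p : G × G => mul p.1 p.2)
    {p : G × G | src p.1 = rng p.2}
  etale_src : ∀ g : G, ∃ U : Set G, IsOpen U ∧ g ∈ U ∧ Set.InjOn src U ∧
    ContinuousOn src U ∧ ∀ V ⊆ U, IsOpen V → IsOpen (src '' V)
  etale_rng : ∀ g : G, ∃ U : Set G, IsOpen U ∧ g ∈ U ∧ Set.InjOn rng U ∧
    ContinuousOn rng U ∧ ∀ V ⊆ U, IsOpen V → IsOpen (rng '' V)

namespace EtaleGroupoid

variable {G : Type*} [TopologicalSpace G] (E : EtaleGroupoid G)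

/-- The isotropy of `G`: arrows with equal source and range. -/
def iso : Set G := {g : G | E.src g = E.rng g}

/-- An (open) bisection: an open set on which both the source and range maps are
injective (hence homeomorphisms onto their images). -/
def IsBisection (U : Set G) : Prop :=
  IsOpen U ∧ Set.InjOn E.src U ∧ Set.InjOn E.rng U

/-- The semifinite part of a measure:
`μ_sf(A) = sup { μ(B) : B ⊆ A Borel, μ(B) < ∞ }`. -/
noncomputable def sfPart [MeasurableSpace G] (μ : Measure G) (A : Set G) : ℝ≥0∞ :=
  ⨆ (B : Set G) (_ : MeasurableSet B) (_ : B ⊆ A) (_ : μ B ≠ ⊤), μ B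

/-- A Radon measure on the unit space `G⁰`: a Borel measure on `G` concentrated on
`G⁰` which is finite on compact subsets of `G⁰`, inner regular on open subsets of `G⁰`
and outer regular on Borel subsets of `G⁰`. -/
def IsRadonOnUnits [MeasurableSpace G] (μ : Measure G) : Prop :=
  μ E.unitSpaceᶜ = 0 ∧
  (∀ K : Set G, K ⊆ E.unitSpace → IsCompact K → μ K ≠ ⊤) ∧
  (∀ U : Set G, IsOpen U → U ⊆ E.unitSpace →
    μ U = ⨆ (K : Set G) (_ : IsCompact K) (_ : K ⊆ U), μ K) ∧
  (∀ A : Set G, MeasurableSet A → A ⊆ E.unitSpace →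
    μ A = ⨅ (U : Set G) (_ : IsOpen U) (_ : A ⊆ U ∧ U ⊆ E.unitSpace), μ U)

/-- `G` is essentially free with respect to `μ`:
`μ_sf(s(U ∩ Iso(G) \ G⁰)) = 0` for every open bisection `U`. -/
def EssentiallyFree [MeasurableSpace G] (μ : Measure G) : Prop :=
  ∀ U : Set G, E.IsBisection U →
    sfPart μ (E.src '' ((U ∩ E.iso) \ E.unitSpace)) = 0

end EtaleGroupoid

namespace EtaleGroupoid

variable {G : Type*} [TopologicalSpace G]

lemma continuous_src' (E : EtaleGroupoid G) : Continuous E.src := by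
  rw [continuous_iff_continuousAt]
  intro g
  obtain ⟨U, hUo, hgU, _, hc, _⟩ := E.etale_src g
  exact hc.continuousAt (hUo.mem_nhds hgU)

lemma continuous_rng' (E : EtaleGroupoid G) : Continuous E.rng := by
  rw [continuous_iff_continuousAt]
  intro g
  obtain ⟨U, hUo, hgU, _, hc, _⟩ := E.etale_rng g
  exact hc.continuousAt (hUo.mem_nhds hgU)

lemma isOpen_src_image' (E : EtaleGroupoid G) {W : Set G} (hW : IsOpen W) :
    IsOpen (E.src '' W) := by
  rw [isOpen_iff_forall_mem_open]
  rintro x ⟨g, hgW, rfl⟩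
  obtain ⟨U, hUo, hgU, _, _, hopen⟩ := E.etale_src g
  exact ⟨E.src '' (W ∩ U), Set.image_mono Set.inter_subset_left,
    hopen _ Set.inter_subset_right (hW.inter hUo), ⟨g, ⟨hgW, hgU⟩, rfl⟩⟩

lemma isClosed_iso' (E : EtaleGroupoid G) : IsClosed E.iso := by
  haveI : T2Space E.unitSpace := by
    constructor
    intro x y hxy
    obtain ⟨U, V, hU, hV, hxU, hyV, hUV⟩ :=
      E.t2_unitSpace x x.2 y y.2 (fun h => hxy (Subtype.ext h))
    exact ⟨Subtype.val ⁻¹' U, Subtype.val ⁻¹' V, hU.preimage continuous_subtype_val,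
      hV.preimage continuous_subtype_val, hxU, hyV,
      (Set.disjoint_iff_inter_eq_empty.mpr hUV).preimage _⟩
  have h : E.iso
      = {g | (⟨E.src g, E.src_mem g⟩ : E.unitSpace) = ⟨E.rng g, E.rng_mem g⟩} := by
    ext g; simp [iso, Subtype.ext_iff]
  rw [h]
  exact isClosed_eq (E.continuous_src'.subtype_mk _) (E.continuous_rng'.subtype_mk _)

lemma sfPart_eq_zero_iff' [MeasurableSpace G] (μ : Measure G) (A : Set G) :
    sfPart μ A = 0 ↔ ∀ B : Set G, MeasurableSet B → B ⊆ A → μ B ≠ ⊤ → μ B = 0 := by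
  simp [sfPart, ENNReal.iSup_eq_zero]

/-- Let `G` be an étale groupoid which can be covered by countably
many open bisections, and `μ` a Radon measure on `G⁰`.  Then `G` is essentially free
with respect to `μ` if and only if `μ_sf({x ∈ G⁰ : G_x^x ≠ {x}}) = 0`. -/
theorem essentiallyFree_iff_sfPart_nontrivialIsotropy_eq_zero
    [MeasurableSpace G] [BorelSpace G] (E : EtaleGroupoid G)
    (μ : MeasureTheory.Measure G) (hμ : E.IsRadonOnUnits μ)
    (hcount : ∃ 𝒰 : ℕ → Set G, (∀ n, E.IsBisection (𝒰 n)) ∧ (⋃ n, 𝒰 n) = Set.univ) :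
    E.EssentiallyFree μ ↔
      sfPart μ {x : G | x ∈ E.unitSpace ∧
        ∃ g : G, g ≠ x ∧ E.src g = x ∧ E.rng g = x} = 0 := by
  obtain ⟨𝒰, h𝒰, hcover⟩ := hcount
  set C : Set G := E.iso \ E.unitSpace with hC
  have hCclosed : IsClosed C := (E.isClosed_iso').sdiff E.isOpen_unitSpace
  -- the nontrivial isotropy set equals the image of `C` under `src`
  have hSeq : {x : G | x ∈ E.unitSpace ∧ ∃ g : G, g ≠ x ∧ E.src g = x ∧ E.rng g = x}
      = E.src '' C := by
    ext x
    constructor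
    · rintro ⟨hx, g, hgx, hs, hr⟩
      refine ⟨g, ⟨by simp [iso, hs, hr], fun hg => hgx ?_⟩, hs⟩
      rw [← E.src_unit g hg]; exact hs
    · rintro ⟨g, ⟨hgiso, hgns⟩, rfl⟩
      exact ⟨E.src_mem g, g, fun h => hgns (by rw [h]; exact E.src_mem g), rfl, hgiso.symm⟩
  have hdiff : ∀ U : Set G, (U ∩ E.iso) \ E.unitSpace = U ∩ C := by
    intro U; rw [hC, Set.inter_diff_assoc]
  -- each piece is measurable
  have hTmeas : ∀ n, MeasurableSet (E.src '' (𝒰 n ∩ C)) := by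
    intro n
    have inj : Set.InjOn E.src (𝒰 n) := (h𝒰 n).2.1
    have h1 : E.src '' (𝒰 n ∩ C) = (E.src '' 𝒰 n) \ (E.src '' (𝒰 n ∩ Cᶜ)) := by
      ext x
      constructor
      · rintro ⟨g, ⟨hg𝒰, hgC⟩, rfl⟩
        refine ⟨⟨g, hg𝒰, rfl⟩, ?_⟩
        rintro ⟨g', ⟨hg'𝒰, hg'C⟩, hgg'⟩
        exact hg'C (by rw [inj hg'𝒰 hg𝒰 hgg']; exact hgC)
      · rintro ⟨⟨g, hg𝒰, rfl⟩, hx⟩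
        refine ⟨g, ⟨hg𝒰, ?_⟩, rfl⟩
        by_contra hgC
        exact hx ⟨g, ⟨hg𝒰, hgC⟩, rfl⟩
    rw [h1]
    exact ((E.isOpen_src_image' (h𝒰 n).1).measurableSet).diff
      ((E.isOpen_src_image' ((h𝒰 n).1.inter hCclosed.isOpen_compl)).measurableSet)
  have hUnion : E.src '' C = ⋃ n, E.src '' (𝒰 n ∩ C) := by
    rw [← Set.image_iUnion, ← Set.iUnion_inter, hcover, Set.univ_inter]
  constructor
  · intro hEF
    rw [sfPart_eq_zero_iff']
    intro B hB hBS hBfin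
    rw [hSeq, hUnion] at hBS
    have hB' : B = ⋃ n, B ∩ E.src '' (𝒰 n ∩ C) := by
      rw [← Set.inter_iUnion]
      exact (Set.inter_eq_left.mpr hBS).symm
    have hle : μ B ≤ ∑' n, μ (B ∩ E.src '' (𝒰 n ∩ C)) := by
      conv_lhs => rw [hB']
      exact measure_iUnion_le _
    have hzero : ∀ n, μ (B ∩ E.src '' (𝒰 n ∩ C)) = 0 := by
      intro n
      have h0 := (sfPart_eq_zero_iff' μ _).mp (hEF (𝒰 n) (h𝒰 n))
      rw [hdiff] at h0
      exact h0 _ (hB.inter (hTmeas n)) Set.inter_subset_right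
        ((measure_mono Set.inter_subset_left).trans_lt (lt_top_iff_ne_top.mpr hBfin)).ne
    simpa [hzero] using hle
  · intro hS0 U hU
    rw [sfPart_eq_zero_iff'] at hS0 ⊢
    intro B hB hBsub hBfin
    refine hS0 B hB (hBsub.trans ?_) hBfin
    rw [hSeq, hdiff]
    exact Set.image_mono Set.inter_subset_right

end EtaleGroupoid
end
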